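/- Let H ∈ ℝ₊^{r×n} satisfy the NC-SSC. Then the condition C ⊆ cone(H) fails if and only if there exists x ∈ ℝ^r with Hᵀx ≥ 0, eᵀx = 1, and ‖x‖₂ > 1. -/

import Mathlib

noncomputable def euclidEnorm {r : ℕ} (x : Fin r → ℝ) : ℝ := Real.sqrt (∑ i, (x i) ^ 2)

def sscCone (r : ℕ) : Set (Fin r → ℝ) :=
  {x | Real.sqrt ((r : ℝ) - 1) * euclidEnorm x ≤ ∑ i, x i}

def coneOf {r n : ℕ} (H : Matrix (Fin r) (Fin n) ℝ) : Set (Fin r → ℝ) :=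
  {x | ∃ y : Fin n → ℝ, (∀ j, 0 ≤ y j) ∧ H.mulVec y = x}

lemma mulVec_restrict {r n : ℕ} (H : Matrix (Fin r) (Fin n) ℝ) (t : Finset (Fin n))
    (z : Fin n → ℝ) (hz : ∀ j ∉ t, z j = 0) :
    (∑ j : {j // j ∈ t}, z j.1 • (fun i => H i j.1)) = H.mulVec z := by
  funext i
  rw [Finset.sum_apply]
  have h1 : ∑ j : {j // j ∈ t}, (z j.1 • (fun i => H i j.1)) i
      = ∑ j ∈ t, z j * H i j := by
    rw [← Finset.sum_attach t (fun j => z j * H i j)]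
    rfl
  rw [h1, Matrix.mulVec, dotProduct]
  rw [Finset.sum_subset (Finset.subset_univ t)]
  · exact Finset.sum_congr rfl fun j _ => mul_comm _ _
  · intro j _ hj
    simp [hz j hj]

lemma carath {r n : ℕ} (H : Matrix (Fin r) (Fin n) ℝ) :
    ∀ (k : ℕ) (s : Finset (Fin n)) (y : Fin n → ℝ), s.card ≤ k →
      (∀ j, 0 ≤ y j) → (∀ j ∉ s, y j = 0) →
      ∃ t : Finset (Fin n), LinearIndependent ℝ (fun j : {j // j ∈ t} => fun i => H i j.1) ∧
        ∃ z : Fin n → ℝ, (∀ j, 0 ≤ z j) ∧ (∀ j ∉ t, z j = 0) ∧ H.mulVec z = H.mulVec y := by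
  intro k
  induction k with
  | zero =>
    intro s y hcard hy hsupp
    have hs : s = ∅ := Finset.card_eq_zero.mp (Nat.le_zero.mp hcard)
    subst hs
    refine ⟨∅, linearIndependent_empty_type, y, hy, hsupp, rfl⟩
  | succ k ih =>
    intro s y hcard hy hsupp
    by_cases hli : LinearIndependent ℝ (fun j : {j // j ∈ s} => fun i => H i (j.1))
    · exact ⟨s, hli, y, hy, hsupp, rfl⟩
    · obtain ⟨g, hgsum, j1, hgj1⟩ := Fintype.not_linearIndependent_iff.mp hli
      -- make the coefficient at j1 positive
      set σ : ℝ := if 0 < g j1 then 1 else -1 with hσ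
      have hσsum : ∑ j : {j // j ∈ s}, (σ * g j) • (fun i => H i j.1) = 0 := by
        have : ∑ j : {j // j ∈ s}, (σ * g j) • (fun i => H i j.1)
            = σ • ∑ j : {j // j ∈ s}, g j • (fun i => H i j.1) := by
          rw [Finset.smul_sum]; exact Finset.sum_congr rfl fun j _ => (smul_smul σ (g j) _).symm
        rw [this, hgsum, smul_zero]
      have hσpos : 0 < σ * g j1 := by
        rcases lt_trichotomy (g j1) 0 with h | h | h
        · have : σ = -1 := by rw [hσ, if_neg (not_lt.mpr h.le)]
          rw [this]; nlinarith
        · exact absurd h hgj1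
        · have : σ = 1 := by rw [hσ, if_pos h]
          rw [this]; nlinarith
      classical
      set G : Fin n → ℝ := fun j => if h : j ∈ s then σ * g ⟨j, h⟩ else 0 with hG
      have hGout : ∀ j ∉ s, G j = 0 := fun j hj => by simp [hG, hj]
      have hmv : H.mulVec G = 0 := by
        rw [← mulVec_restrict H s G hGout]
        calc (∑ j : {j // j ∈ s}, G j.1 • (fun i => H i j.1))
            = ∑ j : {j // j ∈ s}, (σ * g j) • (fun i => H i j.1) := by
              refine Finset.sum_congr rfl fun j _ => ?_
              congr 1
              simp [hG, j.2]
          _ = 0 := hσsum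
      have hGsum : ∀ i, ∑ j, H i j * G j = 0 := by
        intro i
        have := congrFun hmv i
        simpa [Matrix.mulVec, dotProduct] using this
      -- choose minimizing ratio
      set T : Finset (Fin n) := s.filter (fun j => 0 < G j) with hT
      have hj1T : (j1 : Fin n) ∈ T := by
        rw [hT, Finset.mem_filter]
        refine ⟨j1.2, ?_⟩
        simpa [hG, j1.2] using hσpos
      obtain ⟨j0, hj0T, hj0min⟩ := T.exists_min_image (fun j => y j / G j) ⟨j1, hj1T⟩
      have hj0s : j0 ∈ s := (Finset.mem_filter.mp hj0T).1
      have hGj0 : 0 < G j0 := (Finset.mem_filter.mp hj0T).2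
      set tm : ℝ := y j0 / G j0 with htm
      have htm0 : 0 ≤ tm := div_nonneg (hy j0) hGj0.le
      set z : Fin n → ℝ := fun j => y j - tm * G j with hz
      have hz0 : ∀ j, 0 ≤ z j := by
        intro j
        by_cases hjT : j ∈ T
        · have hGj : 0 < G j := (Finset.mem_filter.mp hjT).2
          have := hj0min j hjT
          rw [hz]
          have : tm * G j ≤ y j := by
            rw [htm]
            calc y j0 / G j0 * G j ≤ y j / G j * G j := by
                  exact mul_le_mul_of_nonneg_right this hGj.le
              _ = y j := div_mul_cancel₀ _ hGj.ne'
          simp only [hz]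
          linarith
        · have hGj : G j ≤ 0 := by
            by_cases hjs : j ∈ s
            · by_contra hpos
              exact hjT (Finset.mem_filter.mpr ⟨hjs, lt_of_not_ge hpos⟩)
            · rw [hGout j hjs]
          have : tm * G j ≤ 0 := mul_nonpos_of_nonneg_of_nonpos htm0 hGj
          have := hy j
          simp only [hz]
          linarith
      have hzsupp : ∀ j ∉ s.erase j0, z j = 0 := by
        intro j hj
        rw [Finset.mem_erase] at hj
        push_neg at hj
        by_cases hjs : j ∈ s
        · have hjj0 : j = j0 := by
            by_contra hne
            exact (hj hne) hjs
          subst hjj0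
          simp only [hz, htm]
          field_simp
          ring
        · simp only [hz, hsupp j hjs, hGout j hjs, mul_zero, sub_zero]
      have hmvz : H.mulVec z = H.mulVec y := by
        funext i
        simp only [hz, Matrix.mulVec, dotProduct]
        have expand : ∑ j, H i j * (y j - tm * G j)
            = (∑ j, H i j * y j) - tm * ∑ j, H i j * G j := by
          rw [Finset.mul_sum, ← Finset.sum_sub_distrib]
          refine Finset.sum_congr rfl fun j _ => by ring
        rw [expand, hGsum i, mul_zero, sub_zero]
      have hcard' : (s.erase j0).card ≤ k := by
        have := Finset.card_erase_of_mem hj0s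
        omega
      obtain ⟨t, hind, w, hw0, hwsupp, hwmv⟩ := ih (s.erase j0) z hcard' hz0 hzsupp
      exact ⟨t, hind, w, hw0, hwsupp, hwmv.trans hmvz⟩

lemma isClosed_nonneg_pi {ι : Type*} [Fintype ι] : IsClosed {z : ι → ℝ | ∀ j, 0 ≤ z j} := by
  have : {z : ι → ℝ | ∀ j, 0 ≤ z j} = ⋂ j, (fun z : ι → ℝ => z j) ⁻¹' Set.Ici 0 := by
    ext z; simp [Set.mem_iInter]
  rw [this]
  exact isClosed_iInter fun j => IsClosed.preimage (continuous_apply j) isClosed_Ici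

lemma isClosed_coneOf {r n : ℕ} (H : Matrix (Fin r) (Fin n) ℝ) : IsClosed (coneOf H) := by
  classical
  have hunion : coneOf H = ⋃ t : Finset (Fin n),
      {x | LinearIndependent ℝ (fun j : {j // j ∈ t} => fun i => H i j.1) ∧
        ∃ z : Fin n → ℝ, (∀ j, 0 ≤ z j) ∧ (∀ j ∉ t, z j = 0) ∧ H.mulVec z = x} := by
    ext x
    constructor
    · rintro ⟨y, hy, rfl⟩
      obtain ⟨t, hind, z, hz0, hzsupp, hzmv⟩ :=
        carath H Finset.univ.card Finset.univ y le_rfl hy (by simp)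
      exact Set.mem_iUnion.mpr ⟨t, hind, z, hz0, hzsupp, hzmv⟩
    · intro hx
      obtain ⟨t, _, z, hz0, _, hzmv⟩ := Set.mem_iUnion.mp hx
      exact ⟨z, hz0, hzmv⟩
  rw [hunion]
  refine isClosed_iUnion_of_finite fun t => ?_
  by_cases hind : LinearIndependent ℝ (fun j : {j // j ∈ t} => fun i => H i j.1)
  · -- the set is the image of the nonneg orthant under an injective linear map
    set f : ({j // j ∈ t} → ℝ) →ₗ[ℝ] (Fin r → ℝ) :=
      Fintype.linearCombination ℝ (fun j : {j // j ∈ t} => fun i => H i j.1) with hf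
    have hfapp : ∀ w : {j // j ∈ t} → ℝ, f w = ∑ j : {j // j ∈ t}, w j • (fun i => H i j.1) := by
      intro w; simp [hf, Fintype.linearCombination_apply]
    have hker : LinearMap.ker f = ⊥ := by
      rw [LinearMap.ker_eq_bot']
      intro w hw
      rw [hfapp] at hw
      have := Fintype.linearIndependent_iff.mp hind w hw
      funext j; exact this j
    have hemb := f.isClosedEmbedding_of_injective hker
    have himg : {x | LinearIndependent ℝ (fun j : {j // j ∈ t} => fun i => H i j.1) ∧
        ∃ z : Fin n → ℝ, (∀ j, 0 ≤ z j) ∧ (∀ j ∉ t, z j = 0) ∧ H.mulVec z = x}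
        = f '' {w | ∀ j, 0 ≤ w j} := by
      ext x
      constructor
      · rintro ⟨-, z, hz0, hzsupp, rfl⟩
        refine ⟨fun j => z j.1, fun j => hz0 j.1, ?_⟩
        rw [hfapp]
        exact mulVec_restrict H t z hzsupp
      · rintro ⟨w, hw, rfl⟩
        refine ⟨hind, fun j => if h : j ∈ t then w ⟨j, h⟩ else 0, ?_, ?_, ?_⟩
        · intro j
          by_cases h : j ∈ t
          · simpa [h] using hw ⟨j, h⟩
          · simp [h]
        · intro j hj; simp [hj]
        · rw [← mulVec_restrict H t _ (fun j hj => by simp [hj]), hfapp]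
          refine Finset.sum_congr rfl fun j _ => ?_
          congr 1
          simp [j.2]
    rw [himg]
    exact hemb.isClosedMap _ isClosed_nonneg_pi
  · have : {x | LinearIndependent ℝ (fun j : {j // j ∈ t} => fun i => H i j.1) ∧
        ∃ z : Fin n → ℝ, (∀ j, 0 ≤ z j) ∧ (∀ j ∉ t, z j = 0) ∧ H.mulVec z = x} = ∅ := by
      ext x; simp [hind]
    rw [this]
    exact isClosed_empty

lemma sum_mulVec_mul {r n : ℕ} (H : Matrix (Fin r) (Fin n) ℝ) (y : Fin n → ℝ) (x : Fin r → ℝ) :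
    ∑ i, (H.mulVec y) i * x i = ∑ j, y j * (∑ i, H i j * x i) := by
  simp only [Matrix.mulVec, dotProduct, Finset.sum_mul, Finset.mul_sum]
  rw [Finset.sum_comm]
  exact Finset.sum_congr rfl fun j _ => Finset.sum_congr rfl fun i _ => by ring

set_option maxHeartbeats 1000000 in
lemma key_ineq {r : ℕ} (hr : 2 ≤ r) (c x : Fin r → ℝ)
    (hc : Real.sqrt ((r : ℝ) - 1) * euclidEnorm c ≤ ∑ i, c i)
    (hx : euclidEnorm x ≤ ∑ i, x i) :
    0 ≤ ∑ i, c i * x i := by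
  set a := ∑ i, c i with ha_def
  set α := ∑ i, x i with hα_def
  set Q1 := ∑ i, (c i) ^ 2 with hQ1_def
  set Q2 := ∑ i, (x i) ^ 2 with hQ2_def
  set P := ∑ i, c i * x i with hP_def
  have hQ1 : 0 ≤ Q1 := Finset.sum_nonneg fun i _ => sq_nonneg _
  have hQ2 : 0 ≤ Q2 := Finset.sum_nonneg fun i _ => sq_nonneg _
  have hr2 : (2 : ℝ) ≤ (r : ℝ) := by exact_mod_cast hr
  have hrpos : (0 : ℝ) < (r : ℝ) := by linarith
  have hr1 : (0 : ℝ) ≤ (r : ℝ) - 1 := by linarith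
  have ha : 0 ≤ a := le_trans (mul_nonneg (Real.sqrt_nonneg _) (Real.sqrt_nonneg _)) hc
  have hα : 0 ≤ α := le_trans (Real.sqrt_nonneg _) hx
  have h1 : ((r : ℝ) - 1) * Q1 ≤ a ^ 2 := by
    have e : ((r : ℝ) - 1) * Q1 = (Real.sqrt ((r : ℝ) - 1) * euclidEnorm c) ^ 2 := by
      rw [mul_pow, Real.sq_sqrt hr1]
      unfold euclidEnorm
      rw [Real.sq_sqrt hQ1]
    rw [e]
    exact pow_le_pow_left₀ (mul_nonneg (Real.sqrt_nonneg _) (Real.sqrt_nonneg _)) hc 2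
  have h2 : Q2 ≤ α ^ 2 := by
    have e : Q2 = (euclidEnorm x) ^ 2 := by
      unfold euclidEnorm
      rw [Real.sq_sqrt hQ2]
    rw [e]
    exact pow_le_pow_left₀ (Real.sqrt_nonneg _) hx 2
  have hcs := Finset.sum_mul_sq_le_sq_mul_sq Finset.univ
    (fun i => (r : ℝ) * c i - a) (fun i => (r : ℝ) * x i - α)
  have e1 : ∑ i, ((r : ℝ) * c i - a) * ((r : ℝ) * x i - α)
      = (r : ℝ) ^ 2 * P - (r : ℝ) * (a * α) := by
    rw [Finset.sum_congr rfl (fun i _ => show ((r : ℝ) * c i - a) * ((r : ℝ) * x i - α)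
      = (r : ℝ) ^ 2 * (c i * x i) - ((r : ℝ) * α) * c i - ((r : ℝ) * a) * x i + a * α
      from by ring)]
    simp only [Finset.sum_add_distrib, Finset.sum_sub_distrib, ← Finset.mul_sum,
      Finset.sum_const, Finset.card_univ, Fintype.card_fin, nsmul_eq_mul]
    rw [← ha_def, ← hα_def, ← hP_def]
    ring
  have e2 : ∑ i, ((r : ℝ) * c i - a) ^ 2 = (r : ℝ) ^ 2 * Q1 - (r : ℝ) * a ^ 2 := by
    rw [Finset.sum_congr rfl (fun i _ => show ((r : ℝ) * c i - a) ^ 2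
      = (r : ℝ) ^ 2 * (c i ^ 2) - (2 * (r : ℝ) * a) * c i + a ^ 2 from by ring)]
    simp only [Finset.sum_add_distrib, Finset.sum_sub_distrib, ← Finset.mul_sum,
      Finset.sum_const, Finset.card_univ, Fintype.card_fin, nsmul_eq_mul]
    rw [← ha_def, ← hQ1_def]
    ring
  have e3 : ∑ i, ((r : ℝ) * x i - α) ^ 2 = (r : ℝ) ^ 2 * Q2 - (r : ℝ) * α ^ 2 := by
    rw [Finset.sum_congr rfl (fun i _ => show ((r : ℝ) * x i - α) ^ 2
      = (r : ℝ) ^ 2 * (x i ^ 2) - (2 * (r : ℝ) * α) * x i + α ^ 2 from by ring)]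
    simp only [Finset.sum_add_distrib, Finset.sum_sub_distrib, ← Finset.mul_sum,
      Finset.sum_const, Finset.card_univ, Fintype.card_fin, nsmul_eq_mul]
    rw [← hα_def, ← hQ2_def]
    ring
  rw [e1, e2, e3] at hcs
  have f1 : 0 ≤ (r : ℝ) * Q1 - a ^ 2 := by
    have : 0 ≤ ∑ i, ((r : ℝ) * c i - a) ^ 2 := Finset.sum_nonneg fun i _ => sq_nonneg _
    rw [e2] at this
    nlinarith
  have f2 : 0 ≤ (r : ℝ) * Q2 - α ^ 2 := by
    have : 0 ≤ ∑ i, ((r : ℝ) * x i - α) ^ 2 := Finset.sum_nonneg fun i _ => sq_nonneg _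
    rw [e3] at this
    nlinarith
  -- chain of bounds
  have hrsq : (0 : ℝ) < (r : ℝ) ^ 2 := by positivity
  have hcs' : ((r : ℝ) * P - a * α) ^ 2 ≤ ((r : ℝ) * Q1 - a ^ 2) * ((r : ℝ) * Q2 - α ^ 2) := by
    have h' : (r : ℝ) ^ 2 * (((r : ℝ) * P - a * α) ^ 2)
        ≤ (r : ℝ) ^ 2 * (((r : ℝ) * Q1 - a ^ 2) * ((r : ℝ) * Q2 - α ^ 2)) := by
      linear_combination hcs
    exact le_of_mul_le_mul_left h' hrsq
  have hb1 : (r : ℝ) * Q1 - a ^ 2 ≤ Q1 := by nlinarith [h1]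
  have hb2 : (r : ℝ) * Q2 - α ^ 2 ≤ ((r : ℝ) - 1) * α ^ 2 := by nlinarith [h2]
  have hbp : ((r : ℝ) * P - a * α) ^ 2 ≤ Q1 * (((r : ℝ) - 1) * α ^ 2) :=
    le_trans hcs' (mul_le_mul hb1 hb2 f2 (le_trans f1 hb1))
  have h1' : Q1 * ((r : ℝ) - 1) ≤ a ^ 2 := by linarith [h1]
  have hstep : Q1 * ((r : ℝ) - 1) * α ^ 2 ≤ a ^ 2 * α ^ 2 :=
    mul_le_mul_of_nonneg_right h1' (sq_nonneg α)
  have hsq2 : ((r : ℝ) * P - a * α) ^ 2 ≤ (a * α) ^ 2 := by nlinarith [hbp, hstep]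
  by_contra hP
  push_neg at hP
  have hu : (r : ℝ) * P < 0 := mul_neg_of_pos_of_neg hrpos hP
  nlinarith [hsq2, mul_nonneg ha hα, hu]

lemma enorm_inv_smul {r : ℕ} (t : ℝ) (ht : 0 ≤ t) (x : Fin r → ℝ) :
    euclidEnorm (fun i => t * x i) = t * euclidEnorm x := by
  unfold euclidEnorm
  rw [show ∑ i, (t * x i) ^ 2 = t ^ 2 * ∑ i, x i ^ 2 by
      rw [Finset.mul_sum]; exact Finset.sum_congr rfl fun i _ => by ring,
    Real.sqrt_mul (sq_nonneg t), Real.sqrt_sq ht]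

lemma coneOf_smul {r n : ℕ} (H : Matrix (Fin r) (Fin n) ℝ) {t : ℝ} (ht : 0 ≤ t)
    {x : Fin r → ℝ} (hx : x ∈ coneOf H) : t • x ∈ coneOf H := by
  obtain ⟨y, hy, rfl⟩ := hx
  exact ⟨t • y, fun j => mul_nonneg ht (hy j), H.mulVec_smul t y⟩

lemma coneOf_add {r n : ℕ} (H : Matrix (Fin r) (Fin n) ℝ)
    {x x' : Fin r → ℝ} (hx : x ∈ coneOf H) (hx' : x' ∈ coneOf H) : x + x' ∈ coneOf H := by
  obtain ⟨y, hy, rfl⟩ := hx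
  obtain ⟨y', hy', rfl⟩ := hx'
  exact ⟨y + y', fun j => add_nonneg (hy j) (hy' j), H.mulVec_add y y'⟩

/-- Corollary 3.1: under the NC-SSC, `C ⊆ cone(H)` fails iff there is `x` with
`Hᵀx ≥ 0`, `eᵀx = 1` and `‖x‖₂ > 1`. -/
theorem ssc1_fails_iff {r n : ℕ} (hr : 2 ≤ r) (H : Matrix (Fin r) (Fin n) ℝ)
    (hH : ∀ i j, 0 ≤ H i j)
    (hnc : ∀ i : Fin r, ∃ y : Fin n → ℝ, (∀ j, 0 ≤ y j) ∧
      H.mulVec y = fun j => (1 : ℝ) - (if j = i then 1 else 0)) :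
    ¬ (sscCone r ⊆ coneOf H) ↔
      ∃ x : Fin r → ℝ, (∀ j, 0 ≤ ∑ i, H i j * x i) ∧ (∑ i, x i) = 1 ∧ 1 < euclidEnorm x := by
  have hr2 : (2 : ℝ) ≤ (r : ℝ) := by exact_mod_cast hr
  have hrpos : (0 : ℝ) < (r : ℝ) := by linarith
  have hr1 : (0 : ℝ) ≤ (r : ℝ) - 1 := by linarith
  constructor
  · -- forward direction (contrapositive via separation)
    intro hns
    by_contra hno
    push_neg at hno
    apply hns
    intro c hc
    by_contra hcmem
    -- move to EuclideanSpace
    set E := EuclideanSpace ℝ (Fin r)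
    set eqv := EuclideanSpace.equiv (Fin r) ℝ with heqv
    set K : ConvexCone ℝ E :=
      { carrier := ⇑eqv ⁻¹' coneOf H
        smul_mem' := by
          intro t ht z hz
          simp only [Set.mem_preimage, map_smul] at *
          exact coneOf_smul H ht.le hz
        add_mem' := by
          intro z hz w hw
          simp only [Set.mem_preimage, map_add] at *
          exact coneOf_add H hz hw } with hK
    have hKmem : ∀ z : E, z ∈ K ↔ eqv z ∈ coneOf H := fun z => Iff.rfl
    have hne : (K : Set E).Nonempty := by
      refine ⟨0, ?_⟩
      show eqv 0 ∈ coneOf H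
      rw [map_zero]
      exact ⟨0, fun j => le_rfl, H.mulVec_zero⟩
    have hcl : IsClosed (K : Set E) := (isClosed_coneOf H).preimage eqv.continuous
    have hb : eqv.symm c ∉ K := by
      rw [hKmem, eqv.apply_symm_apply]
      exact hcmem
    obtain ⟨v, hv1, hv2⟩ :=
      ProperCone.hyperplane_separation'
        ({ carrier := (K : Set E)
           add_mem' := fun ha hb => K.add_mem ha hb
           zero_mem' := by
             show eqv 0 ∈ coneOf H
             rw [map_zero]
             exact ⟨0, fun j => le_rfl, H.mulVec_zero⟩
           smul_mem' := fun c z hz => by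
             show eqv ((c : ℝ) • z) ∈ coneOf H
             rw [map_smul]
             exact coneOf_smul H c.2 hz
           isClosed' := hcl } : ProperCone ℝ E) hb
    set x : Fin r → ℝ := ⇑eqv v with hx
    have inner_eq : ∀ z w : E, (inner ℝ z w : ℝ) = ∑ i, eqv z i * eqv w i := by
      intro z w
      rw [PiLp.inner_apply]
      exact Finset.sum_congr rfl fun i _ => by simp [eqv, mul_comm]
    -- H^T x ≥ 0
    have hHx : ∀ j, 0 ≤ ∑ i, H i j * x i := by
      intro j
      have hcol : (fun i => H i j) ∈ coneOf H := by
        refine ⟨Pi.single j 1, fun j' => ?_, ?_⟩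
        · rcases eq_or_ne j' j with h | h
          · subst h; simp
          · simp [Pi.single_apply, h]
        · funext i
          simp [Matrix.mulVec, dotProduct, Pi.single_apply, mul_ite]
      have hmem : eqv.symm (fun i => H i j) ∈ K := by
        rw [hKmem, eqv.apply_symm_apply]; exact hcol
      have := hv1 _ hmem
      rw [inner_eq, eqv.apply_symm_apply] at this
      simpa using this
    -- e^T x ≥ x_i
    have hxi : ∀ i0, x i0 ≤ ∑ i, x i := by
      intro i0
      obtain ⟨y, hy, hmv⟩ := hnc i0
      have hmem : eqv.symm (fun j => (1 : ℝ) - (if j = i0 then 1 else 0)) ∈ K := by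
        rw [hKmem, eqv.apply_symm_apply]
        exact ⟨y, hy, hmv⟩
      have := hv1 _ hmem
      rw [inner_eq, eqv.apply_symm_apply] at this
      have heval : ∑ i, ((1 : ℝ) - (if i = i0 then 1 else 0)) * x i
          = (∑ i, x i) - x i0 := by
        simp [sub_mul, Finset.sum_sub_distrib, ite_mul]
      rw [heval] at this
      linarith
    have hα : 0 ≤ ∑ i, x i := by
      have hsum : ∑ i0, x i0 ≤ ∑ _i0 : Fin r, (∑ i, x i) :=
        Finset.sum_le_sum fun i0 _ => hxi i0
      rw [Finset.sum_const, Finset.card_univ, Fintype.card_fin, nsmul_eq_mul] at hsum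
      nlinarith
    have henorm : euclidEnorm x ≤ ∑ i, x i := by
      rcases eq_or_lt_of_le hα with hS | hS
      · -- sum is zero: all entries ≤ 0 summing to 0, so x = 0
        have hxle : ∀ i, x i ≤ 0 := fun i => by
          have := hxi i; rw [← hS] at this; linarith
        have hx0 : ∀ i ∈ Finset.univ, x i = 0 := by
          rw [← Finset.sum_eq_zero_iff_of_nonpos (fun i _ => hxle i)]
          exact hS.symm
        have : euclidEnorm x = 0 := by
          unfold euclidEnorm
          rw [Finset.sum_congr rfl (fun i hi => show x i ^ 2 = 0 from by simp [hx0 i hi])]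
          simp
        rw [this, ← hS]
      · -- normalize and use hno
        set S := ∑ i, x i with hSdef
        have hS0 : S ≠ 0 := ne_of_gt hS
        have h1 : ∀ j, 0 ≤ ∑ i, H i j * (S⁻¹ * x i) := by
          intro j
          have : ∑ i, H i j * (S⁻¹ * x i) = S⁻¹ * ∑ i, H i j * x i := by
            rw [Finset.mul_sum]
            exact Finset.sum_congr rfl fun i _ => by ring
          rw [this]
          exact mul_nonneg (inv_nonneg.mpr hS.le) (hHx j)
        have h2 : ∑ i, S⁻¹ * x i = 1 := by
          rw [← Finset.mul_sum, ← hSdef, inv_mul_cancel₀ hS0]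
        have h3 := hno (fun i => S⁻¹ * x i) h1 h2
        rw [enorm_inv_smul S⁻¹ (inv_nonneg.mpr hS.le) x] at h3
        calc euclidEnorm x = S * (S⁻¹ * euclidEnorm x) := by field_simp
          _ ≤ S * 1 := mul_le_mul_of_nonneg_left h3 hS.le
          _ = S := mul_one S
    -- contradiction with the separating inequality
    have hkey := key_ineq hr c x hc henorm
    rw [inner_eq, eqv.apply_symm_apply] at hv2
    have : ∑ i, c i * eqv v i = ∑ i, c i * x i := by
      exact Finset.sum_congr rfl fun i _ => by rw [hx]
    rw [this] at hv2
    linarith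
  · -- backward direction: explicit construction
    rintro ⟨x, hHx, hsum, hnorm⟩ hsub
    set t := ∑ i, x i ^ 2 with ht_def
    have ht0 : 0 ≤ t := Finset.sum_nonneg fun i _ => sq_nonneg _
    have ht1 : (1 : ℝ) < t := by
      have hs := Real.sq_sqrt ht0
      have : (1 : ℝ) < Real.sqrt t := hnorm
      nlinarith [Real.sqrt_nonneg t]
    have hrt : (0 : ℝ) < (r : ℝ) * t - 1 := by nlinarith
    set D := Real.sqrt (((r : ℝ) - 1) * ((r : ℝ) * t - 1)) with hD_def
    have hD0 : 0 ≤ D := Real.sqrt_nonneg _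
    have hD2 : D ^ 2 = ((r : ℝ) - 1) * ((r : ℝ) * t - 1) :=
      Real.sq_sqrt (mul_nonneg hr1 hrt.le)
    set s := (1 + D) / (r : ℝ) with hs_def
    have hrs : (r : ℝ) * s = 1 + D := by
      rw [hs_def]; field_simp
    set c : Fin r → ℝ := fun i => s - x i with hc_def
    have hsumc : ∑ i, c i = D := by
      have : ∑ i, c i = (r : ℝ) * s - ∑ i, x i := by
        simp [hc_def, Finset.sum_sub_distrib, Finset.card_univ, mul_comm]
      rw [this, hsum, hrs]; ring
    have hsumsq : ∑ i, c i ^ 2 = (r : ℝ) * t - 1 := by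
      have e : ∑ i, c i ^ 2 = (r : ℝ) * s ^ 2 - 2 * s * (∑ i, x i) + ∑ i, x i ^ 2 := by
        rw [Finset.sum_congr rfl (fun i _ => show c i ^ 2
          = s ^ 2 - (2 * s) * x i + x i ^ 2 from by rw [hc_def]; ring)]
        simp only [Finset.sum_add_distrib, Finset.sum_sub_distrib, ← Finset.mul_sum,
          Finset.sum_const, Finset.card_univ, Fintype.card_fin, nsmul_eq_mul]
        try ring
      rw [e, hsum, ← ht_def]
      have hmul : (r : ℝ) * ((r : ℝ) * s ^ 2 - 2 * s * 1 + t) = (r : ℝ) * ((r : ℝ) * t - 1) := by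
        linear_combination ((r : ℝ) * s + D - 1) * hrs + hD2
      exact mul_left_cancel₀ (ne_of_gt hrpos) hmul
    have hcmem : c ∈ sscCone r := by
      show Real.sqrt ((r : ℝ) - 1) * euclidEnorm c ≤ ∑ i, c i
      have : euclidEnorm c = Real.sqrt ((r : ℝ) * t - 1) := by
        unfold euclidEnorm; rw [hsumsq]
      rw [this, hsumc, ← Real.sqrt_mul hr1]
    obtain ⟨y, hy, hyc⟩ := hsub hcmem
    have hpos : 0 ≤ ∑ i, c i * x i := by
      rw [← hyc, sum_mulVec_mul]
      exact Finset.sum_nonneg fun j _ => mul_nonneg (hy j) (hHx j)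
    have hst : s < t := by
      have hlt : D < (r : ℝ) * t - 1 := by
        have h1 : ((r : ℝ) - 1) * ((r : ℝ) * t - 1) < ((r : ℝ) * t - 1) ^ 2 := by nlinarith
        calc D < Real.sqrt (((r : ℝ) * t - 1) ^ 2) := Real.sqrt_lt_sqrt (mul_nonneg hr1 hrt.le) h1
          _ = (r : ℝ) * t - 1 := Real.sqrt_sq hrt.le
      have : (r : ℝ) * s < (r : ℝ) * t := by rw [hrs]; linarith
      exact lt_of_mul_lt_mul_left this hrpos.le
    have hneg : ∑ i, c i * x i = s - t := by
      rw [Finset.sum_congr rfl (fun i _ => show c i * x i = s * x i - x i ^ 2 from by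
        rw [hc_def]; ring)]
      rw [Finset.sum_sub_distrib, ← Finset.mul_sum, hsum, ← ht_def]; ring
    rw [hneg] at hpos
    linarith
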